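/- arXiv:1811.03445 — 4 statements merged into one kernel-verified Lean document; each statement's English description precedes it below -/
import Mathlib

section
/- Let $(f_i)_{i\ge 0}$ be nonnegative reals with $f_0>0$, $\sum_i f_i = 1$, and $\gamma_1 := \sum_{i\ge1} i f_i < 1$. Let $(Q_n)$ satisfy $Q_n = \sum_{i=0}^n Q_{n-i+1} f_i$, $Q_0 \ne 0$. Then $\lim_{n\to\infty} Q_n = Q_0/(1-\gamma_1)$. -/
open Filter Finset

theorem stmt_1 (f Q : ℕ → ℝ)
    (hf_nonneg : ∀ i, 0 ≤ f i) (hf0 : 0 < f 0)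
    (hf_summable : Summable f) (hf_sum : ∑' i, f i = 1)
    (hmean_summable : Summable (fun i : ℕ => (i : ℝ) * f i))
    (hmean : ∑' (i : ℕ), (i : ℝ) * f i < 1)
    (hQ0 : Q 0 ≠ 0)
    (hrec : ∀ n, Q n = ∑ i ∈ Finset.range (n + 1), Q (n - i + 1) * f i) :
    Tendsto Q atTop (nhds (Q 0 / (1 - ∑' (i : ℕ), (i : ℝ) * f i))) := by
  set γ : ℝ := ∑' (i : ℕ), (i : ℝ) * f i with hγdef
  have hγ0 : 0 ≤ γ := tsum_nonneg fun i => mul_nonneg (Nat.cast_nonneg i) (hf_nonneg i)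
  have h1γ : 0 < 1 - γ := by linarith
  set B : ℝ := Q 0 / (1 - γ) with hBdef
  -- tails of f
  set r : ℕ → ℝ := fun n => ∑' i, f (i + (n + 1)) with hrdef
  have hr_nonneg : ∀ n, 0 ≤ r n := fun n => tsum_nonneg fun i => hf_nonneg _
  have hrF : ∀ n, (∑ i ∈ range (n + 1), f i) + r n = 1 := by
    intro n; simp only [hrdef]; rw [Summable.sum_add_tsum_nat_add (n + 1) hf_summable, hf_sum]
  have hr_le1 : ∀ n, r n ≤ 1 := by
    intro n
    have := hrF n
    have h2 : 0 ≤ ∑ i ∈ range (n + 1), f i := Finset.sum_nonneg fun i _ => hf_nonneg i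
    linarith
  have hr0 : r 0 = 1 - f 0 := by
    have := hrF 0
    simp [Finset.sum_range_one] at this
    linarith
  have hr_step : ∀ n, r n = f (n + 1) + r (n + 1) := by
    intro n
    have hs : Summable fun i => f (i + (n + 1)) := (summable_nat_add_iff (n + 1)).2 hf_summable
    simp only [hrdef]
    rw [Summable.tsum_eq_zero_add hs]
    congr 1
    · norm_num
    · apply tsum_congr; intro i; congr 1; omega
  -- summability of r and its sum
  have hI : ∀ N, ∑ n ∈ range N, r n = (∑ m ∈ range (N + 1), (m : ℝ) * f m) + N * r N := by
    intro N
    induction N with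
    | zero => simp
    | succ N ih =>
      rw [Finset.sum_range_succ, ih, Finset.sum_range_succ (fun m => (m : ℝ) * f m) (N + 1)]
      push_cast
      linear_combination ((N : ℝ) + 1) * hr_step N
  have htail_mean : ∀ N : ℕ, (N : ℝ) * r N ≤ γ - ∑ m ∈ range (N + 1), (m : ℝ) * f m := by
    intro N
    have hsum_shift : Summable fun i => ((i + (N + 1) : ℕ) : ℝ) * f (i + (N + 1)) :=
      (summable_nat_add_iff (f := fun i : ℕ => (i : ℝ) * f i) (N + 1)).2 hmean_summable
    have h1 : (N : ℝ) * r N = ∑' i, (N : ℝ) * f (i + (N + 1)) := by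
      simp only [hrdef]; exact (tsum_mul_left).symm
    have h2 : (∑' i, (N : ℝ) * f (i + (N + 1))) ≤ ∑' i, ((i + (N + 1) : ℕ) : ℝ) * f (i + (N + 1)) := by
      apply Summable.tsum_le_tsum _ _ hsum_shift
      · intro i
        apply mul_le_mul_of_nonneg_right _ (hf_nonneg _)
        push_cast; linarith [Nat.cast_nonneg (α := ℝ) i]
      · exact Summable.mul_left _ ((summable_nat_add_iff (N + 1)).2 hf_summable)
    have h3 : (∑ m ∈ range (N + 1), (m : ℝ) * f m) + ∑' i, ((i + (N + 1) : ℕ) : ℝ) * f (i + (N + 1)) = γ := by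
      exact Summable.sum_add_tsum_nat_add (N + 1) hmean_summable
    linarith
  have hpartial_le : ∀ N, ∑ n ∈ range N, r n ≤ γ := by
    intro N
    rw [hI N]
    have := htail_mean N
    linarith
  have hr_summable : Summable r := summable_of_sum_range_le hr_nonneg hpartial_le
  have hr_sum : ∑' n, r n = γ := by
    apply le_antisymm
    · exact Summable.tsum_le_of_sum_range_le hr_summable hpartial_le
    · apply le_of_tendsto hmean_summable.hasSum.tendsto_sum_nat
      filter_upwards with N
      calc ∑ m ∈ range N, (m : ℝ) * f m
          ≤ ∑ m ∈ range (N + 1), (m : ℝ) * f m := by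
            rw [Finset.sum_range_succ]
            nlinarith [mul_nonneg (Nat.cast_nonneg (α := ℝ) N) (hf_nonneg N)]
        _ ≤ ∑ n ∈ range N, r n := by
            rw [hI N]
            nlinarith [mul_nonneg (Nat.cast_nonneg (α := ℝ) N) (hr_nonneg N)]
        _ ≤ ∑' n, r n := Summable.sum_le_tsum _ (fun i _ => hr_nonneg i) hr_summable
  -- tails of r
  set t : ℕ → ℝ := fun N => ∑' k, r (k + N) with htdef
  have ht_sum : ∀ N, (∑ n ∈ range N, r n) + t N = γ := by
    intro N; simp only [htdef]; rw [Summable.sum_add_tsum_nat_add N hr_summable, hr_sum]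
  have ht_nonneg : ∀ N, 0 ≤ t N := fun N => tsum_nonneg fun k => hr_nonneg _
  have ht_le : ∀ N, t N ≤ γ := by
    intro N
    have := ht_sum N
    have h2 : 0 ≤ ∑ n ∈ range N, r n := Finset.sum_nonneg fun i _ => hr_nonneg i
    linarith
  have ht_anti : ∀ N, t (N + 1) ≤ t N := by
    intro N
    have h1 := ht_sum N
    have h2 := ht_sum (N + 1)
    rw [Finset.sum_range_succ] at h2
    have := hr_nonneg N
    linarith
  set ρ : ℝ := γ - r 0 with hρdef
  have hρf0 : f 0 - ρ = 1 - γ := by rw [hρdef, hr0]; ring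
  have hρ0 : 0 ≤ ρ := by
    have h1 := ht_sum 1
    rw [Finset.sum_range_one] at h1
    rw [hρdef]
    linarith [ht_nonneg 1]
  have hshift_sum : ∀ m, ∑ j ∈ range m, r (j + 1) = ρ - t (m + 1) := by
    intro m
    have h1 : ∑ j ∈ range (m + 1), r j = (∑ j ∈ range m, r (j + 1)) + r 0 :=
      Finset.sum_range_succ' r m
    have h2 := ht_sum (m + 1)
    rw [h1] at h2
    rw [hρdef]; linarith
  have hshift_le : ∀ m, ∑ j ∈ range m, r (j + 1) ≤ ρ := by
    intro m
    rw [hshift_sum m]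
    linarith [ht_nonneg (m + 1)]
  -- the key identity (star)
  have hstar : ∀ n, f 0 * Q n =
      Q 0 * (∑ i ∈ range (n + 1), f i) + ∑ j ∈ range n, r (j + 1) * Q (n - 1 - j) := by
    intro n
    induction n with
    | zero => simp [Finset.sum_range_one]; ring
    | succ n ih =>
      have hrecn := hrec n
      rw [Finset.sum_range_succ' (fun i => Q (n - i + 1) * f i) n] at hrecn
      -- hrecn : Q n = (∑ i ∈ range n, Q (n - (i+1) + 1) * f (i+1)) + Q (n - 0 + 1) * f 0
      have hA : Q n = (∑ i ∈ range n, Q (n - i) * f (i + 1)) + Q (n + 1) * f 0 := by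
        have hs : ∑ i ∈ range n, Q (n - (i + 1) + 1) * f (i + 1)
            = ∑ i ∈ range n, Q (n - i) * f (i + 1) := by
          apply Finset.sum_congr rfl
          intro i hi
          rw [Finset.mem_range] at hi
          have hni : n - (i + 1) + 1 = n - i := by omega
          rw [hni]
        rw [hrecn, hs]
        norm_num
      -- rewrite target sum
      have hsplit : ∑ j ∈ range (n + 1), r (j + 1) * Q (n + 1 - 1 - j)
          = (∑ j ∈ range (n + 1), r j * Q (n - j)) - ∑ j ∈ range (n + 1), f (j + 1) * Q (n - j) := by
        rw [← Finset.sum_sub_distrib]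
        apply Finset.sum_congr rfl
        intro j hj
        have : n + 1 - 1 - j = n - j := by omega
        rw [this, hr_step j]
        ring
      have h1 : ∑ j ∈ range (n + 1), r j * Q (n - j)
          = (∑ j ∈ range n, r (j + 1) * Q (n - 1 - j)) + r 0 * Q n := by
        rw [Finset.sum_range_succ' (fun j => r j * Q (n - j)) n]
        have hs : ∑ j ∈ range n, r (j + 1) * Q (n - (j + 1))
            = ∑ j ∈ range n, r (j + 1) * Q (n - 1 - j) := by
          apply Finset.sum_congr rfl
          intro j hj
          have hnj : n - (j + 1) = n - 1 - j := by omega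
          rw [hnj]
        rw [hs]
        norm_num
      have h2 : ∑ j ∈ range (n + 1), f (j + 1) * Q (n - j)
          = (∑ j ∈ range n, f (j + 1) * Q (n - j)) + f (n + 1) * Q 0 := by
        rw [Finset.sum_range_succ]
        have hnn : n - n = 0 := Nat.sub_self n
        rw [hnn]
      have h3 : ∑ i ∈ range n, Q (n - i) * f (i + 1) = ∑ j ∈ range n, f (j + 1) * Q (n - j) := by
        apply Finset.sum_congr rfl; intro i _; ring
      rw [hsplit, h1, h2, Finset.sum_range_succ f (n + 1)]
      rw [h3] at hA
      have hf0r0 : f 0 + r 0 = 1 := by rw [hr0]; ring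
      linear_combination ih - hA - Q n * hf0r0
  -- the error sequence
  set e : ℕ → ℝ := fun n => Q n - B with hedef
  have hf0B : f 0 * B = Q 0 + ρ * B := by
    have : (f 0 - ρ) * B = Q 0 := by
      rw [hρf0, hBdef]
      field_simp
    linarith [this]
  have hstarE : ∀ n, f 0 * e n =
      -(Q 0 * r n) - B * t (n + 1) + ∑ j ∈ range n, r (j + 1) * e (n - 1 - j) := by
    intro n
    have h1 := hstar n
    have h2 : ∑ j ∈ range n, r (j + 1) * Q (n - 1 - j)
        = (∑ j ∈ range n, r (j + 1) * e (n - 1 - j)) + (ρ - t (n + 1)) * B := by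
      rw [← hshift_sum n, Finset.sum_mul, ← Finset.sum_add_distrib]
      apply Finset.sum_congr rfl
      intro j _
      simp only [hedef]
      ring
    have h3 : (∑ i ∈ range (n + 1), f i) = 1 - r n := by linarith [hrF n]
    rw [h2, h3] at h1
    simp only [hedef]
    linarith [h1, hf0B]
  -- global bound
  set M : ℝ := (|Q 0| + |B| * γ) / (1 - γ) with hMdef
  have hM0 : 0 ≤ M := by
    apply div_nonneg _ (le_of_lt h1γ)
    positivity
  have hMeq : f 0 * M = (|Q 0| + |B| * γ) + ρ * M := by
    have : (f 0 - ρ) * M = |Q 0| + |B| * γ := by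
      rw [hρf0, hMdef]; field_simp
    linarith
  have habs_bound : ∀ n c, 0 ≤ c → (∀ j ∈ range n, |e (n - 1 - j)| ≤ c) →
      f 0 * |e n| ≤ |Q 0| * r n + |B| * t (n + 1) + ρ * c := by
    intro n c hc hjc
    have h1 := hstarE n
    have h2 : |f 0 * e n| ≤ |Q 0| * r n + |B| * t (n + 1)
        + ∑ j ∈ range n, r (j + 1) * |e (n - 1 - j)| := by
      rw [h1]
      calc |-(Q 0 * r n) - B * t (n + 1) + ∑ j ∈ range n, r (j + 1) * e (n - 1 - j)|
          ≤ |-(Q 0 * r n) - B * t (n + 1)| + |∑ j ∈ range n, r (j + 1) * e (n - 1 - j)| :=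
            abs_add_le _ _
        _ ≤ |-(Q 0 * r n)| + |B * t (n + 1)| + |∑ j ∈ range n, r (j + 1) * e (n - 1 - j)| := by
            linarith [abs_sub (-(Q 0 * r n)) (B * t (n + 1))]
        _ ≤ |Q 0| * r n + |B| * t (n + 1) + ∑ j ∈ range n, r (j + 1) * |e (n - 1 - j)| := by
            gcongr ?_ + ?_ + ?_
            · rw [abs_neg, abs_mul, abs_of_nonneg (hr_nonneg n)]
            · rw [abs_mul, abs_of_nonneg (ht_nonneg (n + 1))]
            · calc |∑ j ∈ range n, r (j + 1) * e (n - 1 - j)|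
                  ≤ ∑ j ∈ range n, |r (j + 1) * e (n - 1 - j)| := Finset.abs_sum_le_sum_abs _ _
                _ = ∑ j ∈ range n, r (j + 1) * |e (n - 1 - j)| := by
                    apply Finset.sum_congr rfl
                    intro j _
                    rw [abs_mul, abs_of_nonneg (hr_nonneg (j + 1))]
    have h3 : ∑ j ∈ range n, r (j + 1) * |e (n - 1 - j)| ≤ ρ * c := by
      calc ∑ j ∈ range n, r (j + 1) * |e (n - 1 - j)|
          ≤ ∑ j ∈ range n, r (j + 1) * c := by
            apply Finset.sum_le_sum
            intro j hj
            exact mul_le_mul_of_nonneg_left (hjc j hj) (hr_nonneg (j + 1))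
        _ = (∑ j ∈ range n, r (j + 1)) * c := by rw [Finset.sum_mul]
        _ ≤ ρ * c := mul_le_mul_of_nonneg_right (hshift_le n) hc
    have h4 : f 0 * |e n| = |f 0 * e n| := by
      rw [abs_mul, abs_of_pos hf0]
    linarith
  have hM : ∀ n, |e n| ≤ M := by
    intro n
    induction n using Nat.strong_induction_on with
    | _ n ih =>
      have h1 : ∀ j ∈ range n, |e (n - 1 - j)| ≤ M := by
        intro j hj
        rw [Finset.mem_range] at hj
        exact ih (n - 1 - j) (by omega)
      have h2 := habs_bound n M hM0 h1
      have h3 : |Q 0| * r n ≤ |Q 0| * 1 :=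
        mul_le_mul_of_nonneg_left (hr_le1 n) (abs_nonneg _)
      have h4 : |B| * t (n + 1) ≤ |B| * γ :=
        mul_le_mul_of_nonneg_left (ht_le (n + 1)) (abs_nonneg _)
      nlinarith [hMeq]
  have hr_tendsto : Tendsto r atTop (nhds 0) := by
    have h0 : Tendsto (fun N => ∑' i, f (i + N)) atTop (nhds 0) := tendsto_sum_nat_add f
    have h1 : Tendsto (fun n : ℕ => n + 1) atTop atTop := tendsto_add_atTop_nat 1
    exact h0.comp h1
  have ht_tendsto : Tendsto t atTop (nhds 0) := tendsto_sum_nat_add r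
  set κ : ℝ := ρ / f 0 with hκdef
  have hκ0 : 0 ≤ κ := div_nonneg hρ0 (le_of_lt hf0)
  have hκ1 : κ < 1 := by
    rw [hκdef, div_lt_one hf0]
    linarith [hρf0]
  have key : ∀ c : ℝ, 0 ≤ c → (∀ᶠ n in atTop, |e n| ≤ c) →
      ∀ ε : ℝ, 0 < ε → ∀ᶠ n in atTop, |e n| ≤ κ * c + ε := by
    intro c hc hev ε hε
    rw [eventually_atTop] at hev
    obtain ⟨N, hN⟩ := hev
    have hIcoBound : ∀ n, N + 1 ≤ n →
        ∑ j ∈ Finset.Ico (n - N) n, r (j + 1) ≤ t (n - N) := by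
      intro n hn
      have hle : n - N ≤ n := Nat.sub_le n N
      rw [Finset.sum_Ico_eq_sub _ hle]
      have e1 := hshift_sum n
      have e2 := hshift_sum (n - N)
      have e3 : t (n + 1) ≥ 0 := ht_nonneg _
      have e4 : t (n - N + 1) ≤ t (n - N) := ht_anti _
      linarith
    have hsmall : ∀ᶠ n in atTop,
        |Q 0| * r n + |B| * t (n + 1) + M * t (n - N) ≤ f 0 * ε := by
      have hlim : Tendsto (fun n => |Q 0| * r n + |B| * t (n + 1) + M * t (n - N)) atTop
          (nhds 0) := by
        have l1 : Tendsto (fun n => |Q 0| * r n) atTop (nhds 0) := by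
          simpa using hr_tendsto.const_mul |Q 0|
        have l2 : Tendsto (fun n : ℕ => |B| * t (n + 1)) atTop (nhds 0) := by
          simpa using (ht_tendsto.comp (tendsto_add_atTop_nat 1)).const_mul |B|
        have l3 : Tendsto (fun n : ℕ => M * t (n - N)) atTop (nhds 0) := by
          simpa using (ht_tendsto.comp (tendsto_sub_atTop_nat N)).const_mul M
        simpa using (l1.add l2).add l3
      have hpos : (0 : ℝ) < f 0 * ε := mul_pos hf0 hε
      exact hlim.eventually_le_const hpos
    filter_upwards [hsmall, eventually_ge_atTop (N + 1)] with n hns hn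
    have hsplitIdx : n - N ≤ n := Nat.sub_le n N
    have hsum_split :
        ∑ j ∈ range n, r (j + 1) * |e (n - 1 - j)|
          = (∑ j ∈ range (n - N), r (j + 1) * |e (n - 1 - j)|)
            + ∑ j ∈ Finset.Ico (n - N) n, r (j + 1) * |e (n - 1 - j)| :=
      (Finset.sum_range_add_sum_Ico _ hsplitIdx).symm
    have hpart1 : ∑ j ∈ range (n - N), r (j + 1) * |e (n - 1 - j)|
        ≤ (∑ j ∈ range (n - N), r (j + 1)) * c := by
      rw [Finset.sum_mul]
      apply Finset.sum_le_sum
      intro j hj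
      rw [Finset.mem_range] at hj
      apply mul_le_mul_of_nonneg_left _ (hr_nonneg (j + 1))
      apply hN
      omega
    have hpart1' : (∑ j ∈ range (n - N), r (j + 1)) * c ≤ ρ * c :=
      mul_le_mul_of_nonneg_right (hshift_le _) hc
    have hpart2 : ∑ j ∈ Finset.Ico (n - N) n, r (j + 1) * |e (n - 1 - j)|
        ≤ M * t (n - N) := by
      calc ∑ j ∈ Finset.Ico (n - N) n, r (j + 1) * |e (n - 1 - j)|
          ≤ ∑ j ∈ Finset.Ico (n - N) n, r (j + 1) * M := by
            apply Finset.sum_le_sum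
            intro j hj
            exact mul_le_mul_of_nonneg_left (hM _) (hr_nonneg (j + 1))
        _ = (∑ j ∈ Finset.Ico (n - N) n, r (j + 1)) * M := by rw [Finset.sum_mul]
        _ ≤ t (n - N) * M := mul_le_mul_of_nonneg_right (hIcoBound n hn) hM0
        _ = M * t (n - N) := by ring
    have h1 := hstarE n
    have h2 : |f 0 * e n| ≤ |Q 0| * r n + |B| * t (n + 1)
        + ∑ j ∈ range n, r (j + 1) * |e (n - 1 - j)| := by
      rw [h1]
      calc |-(Q 0 * r n) - B * t (n + 1) + ∑ j ∈ range n, r (j + 1) * e (n - 1 - j)|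
          ≤ |-(Q 0 * r n) - B * t (n + 1)| + |∑ j ∈ range n, r (j + 1) * e (n - 1 - j)| :=
            abs_add_le _ _
        _ ≤ |-(Q 0 * r n)| + |B * t (n + 1)| + |∑ j ∈ range n, r (j + 1) * e (n - 1 - j)| := by
            linarith [abs_sub (-(Q 0 * r n)) (B * t (n + 1))]
        _ ≤ |Q 0| * r n + |B| * t (n + 1) + ∑ j ∈ range n, r (j + 1) * |e (n - 1 - j)| := by
            gcongr ?_ + ?_ + ?_
            · rw [abs_neg, abs_mul, abs_of_nonneg (hr_nonneg n)]
            · rw [abs_mul, abs_of_nonneg (ht_nonneg (n + 1))]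
            · calc |∑ j ∈ range n, r (j + 1) * e (n - 1 - j)|
                  ≤ ∑ j ∈ range n, |r (j + 1) * e (n - 1 - j)| := Finset.abs_sum_le_sum_abs _ _
                _ = ∑ j ∈ range n, r (j + 1) * |e (n - 1 - j)| := by
                    apply Finset.sum_congr rfl
                    intro j _
                    rw [abs_mul, abs_of_nonneg (hr_nonneg (j + 1))]
    have h4 : f 0 * |e n| = |f 0 * e n| := by rw [abs_mul, abs_of_pos hf0]
    have h5 : f 0 * |e n| ≤ ρ * c + f 0 * ε := by
      rw [h4]
      calc |f 0 * e n| ≤ |Q 0| * r n + |B| * t (n + 1)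
            + ∑ j ∈ range n, r (j + 1) * |e (n - 1 - j)| := h2
        _ ≤ |Q 0| * r n + |B| * t (n + 1) + (ρ * c + M * t (n - N)) := by
            rw [hsum_split]; linarith
        _ ≤ ρ * c + f 0 * ε := by linarith
    have h6 : κ * c + ε = (ρ * c + f 0 * ε) / f 0 := by
      rw [hκdef]; field_simp
    rw [h6, le_div_iff₀ hf0]
    linarith
  have hiter : ∀ ε : ℝ, 0 < ε → ∀ j : ℕ, ∀ᶠ n in atTop, |e n| ≤ κ ^ j * M + ε / (1 - κ) := by
    intro ε hε
    have hε' : 0 ≤ ε / (1 - κ) := div_nonneg (le_of_lt hε) (by linarith)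
    intro j
    induction j with
    | zero =>
      filter_upwards with n
      have := hM n
      simp only [pow_zero, one_mul]
      linarith
    | succ j ih =>
      have hcnn : 0 ≤ κ ^ j * M + ε / (1 - κ) :=
        add_nonneg (mul_nonneg (pow_nonneg hκ0 j) hM0) hε'
      have hk := key _ hcnn ih ε hε
      filter_upwards [hk] with n hn
      have heq : κ * (κ ^ j * M + ε / (1 - κ)) + ε = κ ^ (j + 1) * M + ε / (1 - κ) := by
        have h1κ' : 1 - κ ≠ 0 := by linarith
        field_simp
        ring
      linarith [heq.le, heq.ge]
  have he_tendsto : Tendsto e atTop (nhds 0) := by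
    rw [Metric.tendsto_atTop]
    intro δ hδ
    have hε : (0 : ℝ) < δ * (1 - κ) / 3 :=
      div_pos (mul_pos hδ (by linarith)) (by norm_num)
    have hpow : Tendsto (fun j : ℕ => κ ^ j * M) atTop (nhds 0) := by
      simpa using (tendsto_pow_atTop_nhds_zero_of_lt_one hκ0 hκ1).mul_const M
    obtain ⟨j, hj⟩ :=
      (hpow.eventually_lt_const (show (0:ℝ) < δ / 3 by positivity)).exists
    have hit := hiter (δ * (1 - κ) / 3) hε j
    rw [eventually_atTop] at hit
    obtain ⟨N, hN⟩ := hit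
    refine ⟨N, fun n hn => ?_⟩
    have h1 := hN n hn
    have h2 : δ * (1 - κ) / 3 / (1 - κ) = δ / 3 := by
      have h1κ' : 1 - κ ≠ 0 := by linarith
      field_simp
    rw [h2] at h1
    rw [Real.dist_eq, sub_zero]
    calc |e n| ≤ κ ^ j * M + δ / 3 := h1
      _ < δ / 3 + δ / 3 := by linarith
      _ < δ := by linarith
  have hfin : Tendsto (fun n => e n + B) atTop (nhds (0 + B)) := he_tendsto.add_const B
  simp only [hedef, sub_add_cancel, zero_add] at hfin
  exact hfin
end

section
/- Let $a_0 \le a_1 \le \dots \le a_L$ be real numbers and define $f_L(z) = \left(\sum_{i=0}^L a_i z^i\right) / \left(\sum_{i=0}^L z^i\right)$ for $z \in (0,1)$. Then $f_L$ is nondecreasing on $(0,1)$; moreover, if the $a_i$ are not all equal, $f_L$ is strictly increasing on $(0,1)$. -/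
open Finset

lemma pow_cross_le {z w : ℝ} (hz : 0 < z) (hzw : z ≤ w) {i j : ℕ} (hji : j ≤ i) :
    z ^ i * w ^ j ≤ w ^ i * z ^ j := by
  have hw : 0 < w := lt_of_lt_of_le hz hzw
  have h1 : z ^ i = z ^ (i - j) * z ^ j := by rw [← pow_add]; congr 1; omega
  have h2 : w ^ i = w ^ (i - j) * w ^ j := by rw [← pow_add]; congr 1; omega
  have h3 : z ^ (i - j) ≤ w ^ (i - j) := pow_le_pow_left₀ hz.le hzw _
  rw [h1, h2]
  have hzj : (0:ℝ) < z ^ j := pow_pos hz j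
  have hwj : (0:ℝ) < w ^ j := pow_pos hw j
  nlinarith [mul_pos hzj hwj, pow_pos hz (i - j)]

lemma pow_cross_lt {z w : ℝ} (hz : 0 < z) (hzw : z < w) {i j : ℕ} (hji : j < i) :
    z ^ i * w ^ j < w ^ i * z ^ j := by
  have hw : 0 < w := lt_trans hz hzw
  have h1 : z ^ i = z ^ (i - j) * z ^ j := by rw [← pow_add]; congr 1; omega
  have h2 : w ^ i = w ^ (i - j) * w ^ j := by rw [← pow_add]; congr 1; omega
  have h3 : z ^ (i - j) < w ^ (i - j) := by
    apply pow_lt_pow_left₀ hzw hz.le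
    omega
  rw [h1, h2]
  have hzj : (0:ℝ) < z ^ j := pow_pos hz j
  have hwj : (0:ℝ) < w ^ j := pow_pos hw j
  nlinarith [mul_pos hzj hwj, pow_pos hz (i - j)]

lemma term_nonneg (n : ℕ) (a : ℕ → ℝ) (hm : ∀ i j, i ≤ j → j < n → a i ≤ a j)
    {z w : ℝ} (hz : 0 < z) (hzw : z ≤ w) {i j : ℕ} (hi : i < n) (hj : j < n) :
    0 ≤ (a i - a j) * (w ^ i * z ^ j - z ^ i * w ^ j) := by
  rcases le_total j i with h | h
  · have h1 : a j ≤ a i := hm j i h hi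
    have h2 : z ^ i * w ^ j ≤ w ^ i * z ^ j := pow_cross_le hz hzw h
    nlinarith
  · have h1 : a i ≤ a j := hm i j h hj
    have h2 : z ^ j * w ^ i ≤ w ^ j * z ^ i := pow_cross_le hz hzw h
    nlinarith

lemma key_identity (n : ℕ) (a : ℕ → ℝ) (z w : ℝ) :
    ∑ i ∈ range n, ∑ j ∈ range n, (a i - a j) * (w ^ i * z ^ j - z ^ i * w ^ j)
      = 2 * ((∑ i ∈ range n, a i * w ^ i) * (∑ j ∈ range n, z ^ j)
        - (∑ i ∈ range n, a i * z ^ i) * (∑ j ∈ range n, w ^ j)) := by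
  have e1 : ∑ i ∈ range n, ∑ j ∈ range n, (a i - a j) * (w ^ i * z ^ j - z ^ i * w ^ j)
      = (∑ i ∈ range n, ∑ j ∈ range n, a i * (w ^ i * z ^ j - z ^ i * w ^ j))
        - ∑ i ∈ range n, ∑ j ∈ range n, a j * (w ^ i * z ^ j - z ^ i * w ^ j) := by
    rw [← Finset.sum_sub_distrib]
    refine Finset.sum_congr rfl fun i _ => ?_
    rw [← Finset.sum_sub_distrib]
    exact Finset.sum_congr rfl fun j _ => by ring
  have e2 : ∑ i ∈ range n, ∑ j ∈ range n, a j * (w ^ i * z ^ j - z ^ i * w ^ j)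
      = - ∑ i ∈ range n, ∑ j ∈ range n, a i * (w ^ i * z ^ j - z ^ i * w ^ j) := by
    rw [Finset.sum_comm, ← Finset.sum_neg_distrib]
    refine Finset.sum_congr rfl fun i _ => ?_
    rw [← Finset.sum_neg_distrib]
    exact Finset.sum_congr rfl fun j _ => by ring
  have e3 : ∑ i ∈ range n, ∑ j ∈ range n, a i * (w ^ i * z ^ j - z ^ i * w ^ j)
      = (∑ i ∈ range n, a i * w ^ i) * (∑ j ∈ range n, z ^ j)
        - (∑ i ∈ range n, a i * z ^ i) * (∑ j ∈ range n, w ^ j) := by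
    rw [Finset.sum_mul_sum, Finset.sum_mul_sum, ← Finset.sum_sub_distrib]
    refine Finset.sum_congr rfl fun i _ => ?_
    rw [← Finset.sum_sub_distrib]
    exact Finset.sum_congr rfl fun j _ => by ring
  rw [e1, e2, e3]
  ring

theorem stmt_5 (L : ℕ) (a : ℕ → ℝ)
    (hmono : ∀ i j, i ≤ j → j ≤ L → a i ≤ a j) :
    (∀ z w : ℝ, 0 < z → z < 1 → 0 < w → w < 1 → z ≤ w →
      (∑ i ∈ Finset.range (L + 1), a i * z ^ i) / (∑ i ∈ Finset.range (L + 1), z ^ i)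
        ≤ (∑ i ∈ Finset.range (L + 1), a i * w ^ i) / (∑ i ∈ Finset.range (L + 1), w ^ i)) ∧
    ((∃ i j, i ≤ L ∧ j ≤ L ∧ a i ≠ a j) →
      ∀ z w : ℝ, 0 < z → z < 1 → 0 < w → w < 1 → z < w →
      (∑ i ∈ Finset.range (L + 1), a i * z ^ i) / (∑ i ∈ Finset.range (L + 1), z ^ i)
        < (∑ i ∈ Finset.range (L + 1), a i * w ^ i) / (∑ i ∈ Finset.range (L + 1), w ^ i)) := by
  set n := L + 1 with hn
  have hm : ∀ i j, i ≤ j → j < n → a i ≤ a j := fun i j hij hj => hmono i j hij (by omega)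
  have hden : ∀ z : ℝ, 0 < z → 0 < ∑ i ∈ range n, z ^ i := fun z hz =>
    Finset.sum_pos (fun i _ => pow_pos hz i) (by simp [hn])
  constructor
  · intro z w hz hz1 hw hw1 hzw
    rw [div_le_div_iff₀ (hden z hz) (hden w hw)]
    have hS : 0 ≤ ∑ i ∈ range n, ∑ j ∈ range n,
        (a i - a j) * (w ^ i * z ^ j - z ^ i * w ^ j) := by
      refine Finset.sum_nonneg fun i hi => Finset.sum_nonneg fun j hj => ?_
      exact term_nonneg n a hm hz hzw (mem_range.mp hi) (mem_range.mp hj)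
    have hid := key_identity n a z w
    linarith [hid ▸ hS]
  · rintro ⟨i, j, hi, hj, hne⟩ z w hz hz1 hw hw1 hzw
    obtain ⟨i0, j0, hij0, hj0, hlt⟩ : ∃ i0 j0, i0 < j0 ∧ j0 < n ∧ a i0 < a j0 := by
      rcases lt_trichotomy i j with h | h | h
      · exact ⟨i, j, h, by omega, lt_of_le_of_ne (hmono i j h.le hj) hne⟩
      · exact absurd (congrArg a h) hne
      · exact ⟨j, i, h, by omega, lt_of_le_of_ne (hmono j i h.le hi) hne.symm⟩
    rw [div_lt_div_iff₀ (hden z hz) (hden w hw)]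
    have hS : 0 < ∑ i ∈ range n, ∑ j ∈ range n,
        (a i - a j) * (w ^ i * z ^ j - z ^ i * w ^ j) := by
      apply Finset.sum_pos'
      · intro i hi
        exact Finset.sum_nonneg fun j hj =>
          term_nonneg n a hm hz hzw.le (mem_range.mp hi) (mem_range.mp hj)
      · refine ⟨j0, mem_range.mpr hj0, ?_⟩
        apply Finset.sum_pos'
        · intro j hj
          exact term_nonneg n a hm hz hzw.le hj0 (mem_range.mp hj)
        · refine ⟨i0, mem_range.mpr (by omega), ?_⟩
          have h1 : a i0 < a j0 := hlt
          have h2 : z ^ j0 * w ^ i0 < w ^ j0 * z ^ i0 := pow_cross_lt hz hzw hij0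
          nlinarith
    have hid := key_identity n a z w
    linarith [hid ▸ hS]
end

section
/- Let $j_1, j_2 > 0$, $0 < \rho_2 < 1$, and $\alpha > 0$. Define $J^*(C) = C\left[ j_1 \frac{1}{e^{\alpha C} - 1} + j_2 \frac{\rho_2}{1-\rho_2}\cdot\frac{e^{\alpha C}}{e^{\alpha C}-1} \right]$ for $C \ne 0$, extended continuously at $C = 0$. Then $J^*$ is strictly convex on $\mathbb{R}$. -/
open Real Set Filter Topology

/-- The building-block function `C ↦ C / (exp (α C) - 1)`, extended by `1/α` at `0`. -/
noncomputable def g9 (α : ℝ) (C : ℝ) : ℝ :=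
  if C = 0 then 1 / α else C / (Real.exp (α * C) - 1)

/-- Its derivative away from `0`. -/
noncomputable def d9 (α : ℝ) (C : ℝ) : ℝ :=
  (Real.exp (α * C) - 1 - α * C * Real.exp (α * C)) / (Real.exp (α * C) - 1) ^ 2

lemma e9_ne {α x : ℝ} (hα : 0 < α) (hx : x ≠ 0) : Real.exp (α * x) - 1 ≠ 0 := by
  rw [sub_ne_zero, Ne, Real.exp_eq_one_iff]
  exact mul_ne_zero hα.ne' hx

lemma e9_lt_one {α x : ℝ} (hα : 0 < α) (hx : x < 0) : Real.exp (α * x) < 1 := by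
  have : α * x < 0 := mul_neg_of_pos_of_neg hα hx
  calc Real.exp (α * x) < Real.exp 0 := Real.exp_lt_exp.mpr this
    _ = 1 := Real.exp_zero

lemma one_lt_e9 {α x : ℝ} (hα : 0 < α) (hx : 0 < x) : 1 < Real.exp (α * x) := by
  have : 0 < α * x := mul_pos hα hx
  calc (1 : ℝ) = Real.exp 0 := Real.exp_zero.symm
    _ < Real.exp (α * x) := Real.exp_lt_exp.mpr this

lemma g9_hasDeriv {α x : ℝ} (hα : 0 < α) (hx : x ≠ 0) :
    HasDerivAt (g9 α) (d9 α x) x := by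
  have hE : HasDerivAt (fun C : ℝ => Real.exp (α * C) - 1) (α * Real.exp (α * x)) x := by
    have h1 : HasDerivAt (fun C : ℝ => α * C) α x := by
      simpa using (hasDerivAt_id x).const_mul α
    have := (Real.hasDerivAt_exp (α * x)).comp x h1
    simpa [mul_comm] using this.sub_const 1
  have h := (hasDerivAt_id x).div hE (e9_ne hα hx)
  have heq : (1 * (Real.exp (α * x) - 1) - id x * (α * Real.exp (α * x))) /
      (Real.exp (α * x) - 1) ^ 2 = d9 α x := by
    simp only [id, d9]
    ring_nf
  rw [heq] at h
  apply h.congr_of_eventuallyEq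
  have hmem : {y : ℝ | y ≠ 0} ∈ 𝓝 x := isOpen_ne.mem_nhds hx
  filter_upwards [hmem] with y hy
  simp [g9, hy]

lemma g9_cont {α : ℝ} (hα : 0 < α) : Continuous (g9 α) := by
  rw [continuous_iff_continuousAt]
  intro x
  rcases eq_or_ne x 0 with rfl | hx
  · have hexp : HasDerivAt (fun C : ℝ => Real.exp (α * C)) α 0 := by
      have h1 : HasDerivAt (fun C : ℝ => α * C) α (0 : ℝ) := by
        simpa using (hasDerivAt_id (0 : ℝ)).const_mul α
      have := (Real.hasDerivAt_exp (α * 0)).comp 0 h1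
      simpa [Function.comp_def] using this
    have h1 : Tendsto (fun C : ℝ => (Real.exp (α * C) - 1) / C) (𝓝[≠] 0) (𝓝 α) := by
      have := hasDerivAt_iff_tendsto_slope.mp hexp
      refine this.congr fun C => ?_
      simp [slope_def_field]
    have h2 : Tendsto (fun C : ℝ => C / (Real.exp (α * C) - 1)) (𝓝[≠] 0) (𝓝 (1 / α)) := by
      have := h1.inv₀ hα.ne'
      simpa [inv_div, one_div] using this
    have h3 : Tendsto (g9 α) (𝓝[≠] 0) (𝓝 (1 / α)) := by
      refine h2.congr' ?_
      refine eventually_nhdsWithin_of_forall fun C hC => ?_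
      have : C ≠ 0 := hC
      simp [g9, this]
    have h4 : Tendsto (g9 α) (pure 0) (𝓝 (1 / α)) := by
      have : g9 α 0 = 1 / α := by simp [g9]
      rw [← this]
      exact tendsto_pure_nhds _ 0
    have h5 : Tendsto (g9 α) (𝓝[≠] 0 ⊔ pure 0) (𝓝 (1 / α)) := h3.sup h4
    rw [nhdsNE_sup_pure] at h5
    have : g9 α 0 = 1 / α := by simp [g9]
    rw [ContinuousAt, this]
    exact h5
  · exact (g9_hasDeriv hα hx).continuousAt

lemma d9_hasDeriv {α x : ℝ} (hα : 0 < α) (hx : x ≠ 0) :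
    HasDerivAt (d9 α)
      (α * Real.exp (α * x) *
        (α * x * (Real.exp (α * x) + 1) - 2 * (Real.exp (α * x) - 1)) /
        (Real.exp (α * x) - 1) ^ 3) x := by
  have hlin : HasDerivAt (fun C : ℝ => α * C) α x := by
    simpa using (hasDerivAt_id x).const_mul α
  have hexp : HasDerivAt (fun C : ℝ => Real.exp (α * C)) (α * Real.exp (α * x)) x := by
    have := (Real.hasDerivAt_exp (α * x)).comp x hlin
    simpa [mul_comm, Function.comp_def] using this
  have hnum : HasDerivAt (fun C : ℝ => Real.exp (α * C) - 1 - α * C * Real.exp (α * C))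
      (α * Real.exp (α * x) - (α * Real.exp (α * x) + α * x * (α * Real.exp (α * x)))) x := by
    have h1 := (hexp.sub_const 1)
    have h2 : HasDerivAt (fun C : ℝ => α * C * Real.exp (α * C))
        (α * Real.exp (α * x) + α * x * (α * Real.exp (α * x))) x := hlin.mul hexp
    exact h1.sub h2
  have hden : HasDerivAt (fun C : ℝ => (Real.exp (α * C) - 1) ^ 2)
      (2 * (Real.exp (α * x) - 1) * (α * Real.exp (α * x))) x := by
    have := (hexp.sub_const 1).pow 2
    simpa [mul_comm, mul_assoc, mul_left_comm, Pi.pow_def] using this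
  have hQ : (Real.exp (α * x) - 1) ^ 2 ≠ 0 := pow_ne_zero 2 (e9_ne hα hx)
  have h := hnum.div hden hQ
  have heq : ((α * Real.exp (α * x) - (α * Real.exp (α * x) + α * x * (α * Real.exp (α * x)))) *
        (Real.exp (α * x) - 1) ^ 2 -
        (Real.exp (α * x) - 1 - α * x * Real.exp (α * x)) *
          (2 * (Real.exp (α * x) - 1) * (α * Real.exp (α * x)))) /
        ((Real.exp (α * x) - 1) ^ 2) ^ 2 =
      α * Real.exp (α * x) *
        (α * x * (Real.exp (α * x) + 1) - 2 * (Real.exp (α * x) - 1)) /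
        (Real.exp (α * x) - 1) ^ 3 := by
    have hne := e9_ne hα hx
    field_simp
    ring
  rw [heq] at h
  exact h

lemma aux1 {t : ℝ} (ht : 0 < t) : 0 < 1 - Real.exp t + t * Real.exp t := by
  rcases le_or_gt 1 t with h | h
  · nlinarith [Real.exp_pos t]
  · have hlt : (-t) + 1 < Real.exp (-t) := Real.add_one_lt_exp (by linarith : (-t) ≠ 0)
    have h2 : Real.exp (-t) * Real.exp t = 1 := by
      rw [← Real.exp_add]; simp
    nlinarith [Real.exp_pos t, mul_pos (Real.exp_pos t) (sub_pos.mpr hlt)]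

lemma aux_h_pos {t : ℝ} (ht : 0 < t) :
    0 < t * (Real.exp t + 1) - 2 * (Real.exp t - 1) := by
  set F : ℝ → ℝ := fun s => s * (Real.exp s + 1) - 2 * (Real.exp s - 1) with hF_def
  have hF : ∀ s : ℝ, HasDerivAt F (1 - Real.exp s + s * Real.exp s) s := by
    intro s
    have h1 : HasDerivAt (fun u : ℝ => u * (Real.exp u + 1))
        (1 * (Real.exp s + 1) + s * Real.exp s) s :=
      (hasDerivAt_id s).mul ((Real.hasDerivAt_exp s).add_const 1)
    have h2 : HasDerivAt (fun u : ℝ => 2 * (Real.exp u - 1)) (2 * Real.exp s) s :=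
      ((Real.hasDerivAt_exp s).sub_const 1).const_mul 2
    have := h1.sub h2
    rw [show 1 - Real.exp s + s * Real.exp s =
      1 * (Real.exp s + 1) + s * Real.exp s - 2 * Real.exp s by ring]
    exact this
  have hmono : StrictMonoOn F (Ici 0) := by
    apply strictMonoOn_of_deriv_pos (convex_Ici 0)
    · apply Continuous.continuousOn
      fun_prop
    · intro s hs
      rw [interior_Ici] at hs
      rw [(hF s).deriv]
      exact aux1 hs
  have := hmono (self_mem_Ici) (le_of_lt ht) ht
  simpa [hF_def] using this

lemma aux_h_neg {t : ℝ} (ht : t < 0) :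
    t * (Real.exp t + 1) - 2 * (Real.exp t - 1) < 0 := by
  have h := aux_h_pos (neg_pos.mpr ht)
  have h2 : Real.exp (-t) * Real.exp t = 1 := by rw [← Real.exp_add]; simp
  nlinarith [Real.exp_pos t, mul_pos (Real.exp_pos t) h]

lemma aux_p_pos {t : ℝ} (ht : 0 < t) :
    0 < Real.exp t * Real.exp t - 2 * t * Real.exp t - 1 := by
  have hs : t < Real.sinh t := Real.self_lt_sinh_iff.mpr ht
  rw [Real.sinh_eq] at hs
  have h2 : Real.exp (-t) * Real.exp t = 1 := by rw [← Real.exp_add]; simp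
  nlinarith [Real.exp_pos t, mul_pos (Real.exp_pos t) (sub_pos.mpr hs)]

lemma aux_p_neg {t : ℝ} (ht : t < 0) :
    Real.exp t * Real.exp t - 2 * t * Real.exp t - 1 < 0 := by
  have h := aux_p_pos (neg_pos.mpr ht)
  have h2 : Real.exp (-t) * Real.exp t = 1 := by rw [← Real.exp_add]; simp
  nlinarith [Real.exp_pos t, mul_pos (mul_pos (Real.exp_pos t) (Real.exp_pos t)) h]

lemma d9_lt {α x : ℝ} (hα : 0 < α) (hx : x < 0) : d9 α x < -(1 / 2) := by
  have hQ : 0 < (Real.exp (α * x) - 1) ^ 2 :=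
    pow_two_pos_of_ne_zero (e9_ne hα hx.ne)
  rw [d9, div_lt_iff₀ hQ]
  have hp := aux_p_neg (mul_neg_of_pos_of_neg hα hx)
  nlinarith [hp]

lemma d9_gt {α x : ℝ} (hα : 0 < α) (hx : 0 < x) : -(1 / 2) < d9 α x := by
  have hQ : 0 < (Real.exp (α * x) - 1) ^ 2 :=
    pow_two_pos_of_ne_zero (e9_ne hα hx.ne')
  rw [d9, lt_div_iff₀ hQ]
  have hp := aux_p_pos (mul_pos hα hx)
  nlinarith [hp]

lemma d9_mono_neg {α : ℝ} (hα : 0 < α) : StrictMonoOn (d9 α) (Iio 0) := by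
  apply strictMonoOn_of_deriv_pos (convex_Iio 0)
  · exact fun x hx => ((d9_hasDeriv hα (ne_of_lt hx)).continuousAt).continuousWithinAt
  · intro x hx
    rw [interior_Iio] at hx
    rw [(d9_hasDeriv hα (ne_of_lt hx)).deriv]
    have hnum : α * Real.exp (α * x) *
        (α * x * (Real.exp (α * x) + 1) - 2 * (Real.exp (α * x) - 1)) < 0 :=
      mul_neg_of_pos_of_neg (mul_pos hα (Real.exp_pos _)) (aux_h_neg (mul_neg_of_pos_of_neg hα hx))
    have hden : (Real.exp (α * x) - 1) ^ 3 < 0 :=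
      Odd.pow_neg (⟨1, by norm_num⟩) (by linarith [e9_lt_one hα hx])
    exact div_pos_of_neg_of_neg hnum hden

lemma d9_mono_pos {α : ℝ} (hα : 0 < α) : StrictMonoOn (d9 α) (Ioi 0) := by
  apply strictMonoOn_of_deriv_pos (convex_Ioi 0)
  · exact fun x hx => ((d9_hasDeriv hα (ne_of_gt hx)).continuousAt).continuousWithinAt
  · intro x hx
    rw [interior_Ioi] at hx
    rw [(d9_hasDeriv hα (ne_of_gt hx)).deriv]
    have hnum : 0 < α * Real.exp (α * x) *
        (α * x * (Real.exp (α * x) + 1) - 2 * (Real.exp (α * x) - 1)) :=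
      mul_pos (mul_pos hα (Real.exp_pos _)) (aux_h_pos (mul_pos hα hx))
    have hden : 0 < (Real.exp (α * x) - 1) ^ 3 := by
      have h0 : 0 < Real.exp (α * x) - 1 := by linarith [one_lt_e9 hα hx]
      exact pow_pos h0 3
    exact div_pos hnum hden

lemma g9_deriv_mono_neg {α : ℝ} (hα : 0 < α) : StrictMonoOn (deriv (g9 α)) (Iio 0) := by
  intro a ha b hb hab
  rw [(g9_hasDeriv hα (ne_of_lt ha)).deriv, (g9_hasDeriv hα (ne_of_lt hb)).deriv]
  exact d9_mono_neg hα ha hb hab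

lemma g9_deriv_mono_pos {α : ℝ} (hα : 0 < α) : StrictMonoOn (deriv (g9 α)) (Ioi 0) := by
  intro a ha b hb hab
  rw [(g9_hasDeriv hα (ne_of_gt ha)).deriv, (g9_hasDeriv hα (ne_of_gt hb)).deriv]
  exact d9_mono_pos hα ha hb hab

lemma g9_sc_neg {α : ℝ} (hα : 0 < α) : StrictConvexOn ℝ (Iic 0) (g9 α) := by
  apply StrictMonoOn.strictConvexOn_of_deriv (convex_Iic 0) (g9_cont hα).continuousOn
  rw [interior_Iic]
  exact g9_deriv_mono_neg hα

lemma g9_sc_pos {α : ℝ} (hα : 0 < α) : StrictConvexOn ℝ (Ici 0) (g9 α) := by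
  apply StrictMonoOn.strictConvexOn_of_deriv (convex_Ici 0) (g9_cont hα).continuousOn
  rw [interior_Ici]
  exact g9_deriv_mono_pos hα

lemma g9_cross {α : ℝ} (hα : 0 < α) {x z : ℝ} (hx : x < 0) (hz : 0 < z) :
    (g9 α 0 - g9 α x) / (0 - x) < (g9 α z - g9 α 0) / (z - 0) := by
  obtain ⟨a, ha, hsa⟩ := StrictMonoOn.exists_slope_lt_deriv
    ((g9_cont hα).continuousOn) hx ((g9_deriv_mono_neg hα).mono Ioo_subset_Iio_self)
  obtain ⟨b, hb, hsb⟩ := StrictMonoOn.exists_deriv_lt_slope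
    ((g9_cont hα).continuousOn) hz ((g9_deriv_mono_pos hα).mono Ioo_subset_Ioi_self)
  have h1 : deriv (g9 α) a < -(1 / 2) := by
    rw [(g9_hasDeriv hα (ne_of_lt ha.2)).deriv]
    exact d9_lt hα ha.2
  have h2 : -(1 / 2) < deriv (g9 α) b := by
    rw [(g9_hasDeriv hα (ne_of_gt hb.1)).deriv]
    exact d9_gt hα hb.1
  linarith

lemma glue9 {f : ℝ → ℝ} (h1 : StrictConvexOn ℝ (Iic 0) f) (h2 : StrictConvexOn ℝ (Ici 0) f)
    (hc : ∀ ⦃x z : ℝ⦄, x < 0 → 0 < z → (f 0 - f x) / (0 - x) < (f z - f 0) / (z - 0)) :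
    StrictConvexOn ℝ univ f := by
  apply strictConvexOn_of_slope_strict_mono_adjacent convex_univ
  intro x y z _ _ hxy hyz
  rcases le_or_gt z 0 with hz | hz
  · exact h1.slope_strict_mono_adjacent (mem_Iic.mpr ((hxy.trans hyz).le.trans hz)) (mem_Iic.mpr hz) hxy hyz
  · rcases le_or_gt 0 x with hx | hx
    · exact h2.slope_strict_mono_adjacent (mem_Ici.mpr hx) (mem_Ici.mpr (hx.trans (hxy.trans hyz).le)) hxy hyz
    · rcases lt_trichotomy y 0 with hy | rfl | hy
      · have s12 : (f y - f x) / (y - x) < (f 0 - f y) / (0 - y) :=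
          h1.slope_strict_mono_adjacent (mem_Iic.mpr hx.le) self_mem_Iic hxy hy
        have s23 : (f 0 - f y) / (0 - y) < (f z - f 0) / (z - 0) := hc hy hz
        have key : (f 0 - f y) / (0 - y) ≤ (f z - f y) / (z - y) := by
          rw [div_lt_div_iff₀ (by linarith) (by linarith)] at s23
          rw [div_le_div_iff₀ (by linarith) (by linarith)]
          nlinarith
        exact s12.trans_le key
      · exact hc hx hz
      · have s23 : (f y - f 0) / (y - 0) < (f z - f y) / (z - y) :=
          h2.slope_strict_mono_adjacent self_mem_Ici (mem_Ici.mpr (hy.trans hyz).le) hy hyz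
        have s01 : (f 0 - f x) / (0 - x) < (f y - f 0) / (y - 0) := hc hx hy
        have key : (f y - f x) / (y - x) ≤ (f y - f 0) / (y - 0) := by
          rw [div_lt_div_iff₀ (by linarith) (by linarith)] at s01
          rw [div_le_div_iff₀ (by linarith) (by linarith)]
          nlinarith
        exact key.trans_lt s23

lemma g9_sc {α : ℝ} (hα : 0 < α) : StrictConvexOn ℝ univ (g9 α) :=
  glue9 (g9_sc_neg hα) (g9_sc_pos hα) (fun _ _ hx hz => g9_cross hα hx hz)

theorem stmt_9 (j1 j2 rho2 alpha : ℝ)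
    (hj1 : 0 < j1) (hj2 : 0 < j2) (hrho2 : 0 < rho2) (hrho2' : rho2 < 1)
    (halpha : 0 < alpha)
    (J : ℝ → ℝ)
    (hJ : ∀ C : ℝ, C ≠ 0 →
      J C = C * (j1 * (1 / (Real.exp (alpha * C) - 1))
        + j2 * (rho2 / (1 - rho2)) * (Real.exp (alpha * C) / (Real.exp (alpha * C) - 1))))
    (hJ0 : ContinuousAt J 0) :
    StrictConvexOn ℝ Set.univ J := by
  have h1r : (0:ℝ) < 1 - rho2 := by linarith
  set b : ℝ := j2 * (rho2 / (1 - rho2)) with hb_def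
  have hb : 0 < b := by positivity
  set K : ℝ → ℝ := fun C => b * C + (j1 + b) * g9 alpha C with hK_def
  have hKfun : ∀ C : ℝ, C ≠ 0 → J C = K C := by
    intro C hC
    have hne := e9_ne halpha hC
    rw [hJ C hC, hK_def]
    simp only [g9, if_neg hC, div_eq_mul_inv]
    linear_combination (b * C) * inv_mul_cancel₀ hne
  have hKcont : Continuous K := by
    have := g9_cont halpha
    fun_prop
  have hJ0eq : J 0 = K 0 := by
    have h1 : Tendsto J (𝓝[≠] (0:ℝ)) (𝓝 (J 0)) := hJ0.tendsto.mono_left nhdsWithin_le_nhds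
    have h2 : Tendsto J (𝓝[≠] (0:ℝ)) (𝓝 (K 0)) := by
      refine (hKcont.continuousAt.tendsto.mono_left nhdsWithin_le_nhds).congr' ?_
      exact eventually_nhdsWithin_of_forall fun C hC => (hKfun C hC).symm
    exact tendsto_nhds_unique h1 h2
  have hJK : J = K := by
    funext C
    rcases eq_or_ne C 0 with rfl | hC
    · exact hJ0eq
    · exact hKfun C hC
  rw [hJK]
  have hlin : ConvexOn ℝ univ (fun C : ℝ => b * C) := by
    refine ⟨convex_univ, fun x _ y _ p q hp hq hpq => le_of_eq ?_⟩
    simp only [smul_eq_mul]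
    ring
  have hsc := g9_sc halpha
  have hscaled : StrictConvexOn ℝ univ (fun C : ℝ => (j1 + b) * g9 alpha C) := by
    refine ⟨convex_univ, fun x hx y hy hxy p q hp hq hpq => ?_⟩
    have h := hsc.2 hx hy hxy hp hq hpq
    have hpos : (0:ℝ) < j1 + b := by linarith
    simp only [smul_eq_mul] at h ⊢
    nlinarith [mul_lt_mul_of_pos_left h hpos]
  have := hlin.add_strictConvexOn hscaled
  exact this
end

section
/- Let $a_0 \le a_1 \le \dots \le a_L$ be real numbers, not all equal, and let $F_L(y) = f_L(1 - y/L)$ where $f_L(z) = (\sum_{i=0}^L a_i z^i)/(\sum_{i=0}^L z^i)$. Then $F_L$ is strictly decreasing on $(0, L)$. -/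
open Finset

private lemma pow_cross_le_s16 {z1 z2 : ℝ} (h2 : 0 < z2) (h12 : z2 < z1)
    {i j : ℕ} (hij : i ≤ j) : z1 ^ i * z2 ^ j ≤ z2 ^ i * z1 ^ j := by
  obtain ⟨k, rfl⟩ := Nat.exists_eq_add_of_le hij
  have hz1 : 0 < z1 := h2.trans h12
  have h := pow_le_pow_left₀ h2.le h12.le k
  have h1 : (0:ℝ) ≤ z1 ^ i * z2 ^ i := by positivity
  calc z1 ^ i * z2 ^ (i + k) = (z1 ^ i * z2 ^ i) * z2 ^ k := by rw [pow_add]; ring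
    _ ≤ (z1 ^ i * z2 ^ i) * z1 ^ k := mul_le_mul_of_nonneg_left h h1
    _ = z2 ^ i * z1 ^ (i + k) := by rw [pow_add]; ring

private lemma pow_cross_lt_s16 {z1 z2 : ℝ} (h2 : 0 < z2) (h12 : z2 < z1)
    {i j : ℕ} (hij : i < j) : z1 ^ i * z2 ^ j < z2 ^ i * z1 ^ j := by
  obtain ⟨k, rfl⟩ := Nat.exists_eq_add_of_le hij.le
  have hk : k ≠ 0 := by rintro rfl; exact absurd rfl hij.ne
  have hz1 : 0 < z1 := h2.trans h12
  have h := pow_lt_pow_left₀ h12 h2.le hk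
  have h1 : (0:ℝ) < z1 ^ i * z2 ^ i := by positivity
  calc z1 ^ i * z2 ^ (i + k) = (z1 ^ i * z2 ^ i) * z2 ^ k := by rw [pow_add]; ring
    _ < (z1 ^ i * z2 ^ i) * z1 ^ k := by exact mul_lt_mul_of_pos_left h h1
    _ = z2 ^ i * z1 ^ (i + k) := by rw [pow_add]; ring

private lemma key_ineq (L : ℕ) (a : ℕ → ℝ)
    (hmono : ∀ i j, i ≤ j → j ≤ L → a i ≤ a j)
    (hne : ∃ i j, i ≤ L ∧ j ≤ L ∧ a i ≠ a j)
    (z1 z2 : ℝ) (h2 : 0 < z2) (h12 : z2 < z1) :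
    (∑ i ∈ Finset.range (L + 1), a i * z2 ^ i) * (∑ i ∈ Finset.range (L + 1), z1 ^ i)
      < (∑ i ∈ Finset.range (L + 1), a i * z1 ^ i) * (∑ i ∈ Finset.range (L + 1), z2 ^ i) := by
  set R := Finset.range (L + 1) with hR
  set t : ℕ → ℕ → ℝ := fun i j => z1 ^ i * z2 ^ j - z2 ^ i * z1 ^ j with ht
  -- D = sum over pairs of (a i - a j) * t i j
  have hswap : ∑ i ∈ R, ∑ j ∈ R, a j * t i j = - ∑ i ∈ R, ∑ j ∈ R, a i * t i j := by
    rw [Finset.sum_comm]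
    rw [← Finset.sum_neg_distrib]
    refine Finset.sum_congr rfl fun x _ => ?_
    rw [← Finset.sum_neg_distrib]
    refine Finset.sum_congr rfl fun y _ => ?_
    simp only [ht]; ring
  have hT : ∑ i ∈ R, ∑ j ∈ R, (a i - a j) * t i j
      = 2 * (∑ i ∈ R, ∑ j ∈ R, a i * t i j) := by
    have : ∀ i ∈ R, ∑ j ∈ R, (a i - a j) * t i j
        = (∑ j ∈ R, a i * t i j) - ∑ j ∈ R, a j * t i j := by
      intro i _
      rw [← Finset.sum_sub_distrib]
      exact Finset.sum_congr rfl fun j _ => by ring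
    rw [Finset.sum_congr rfl this, Finset.sum_sub_distrib, hswap]
    ring
  -- positivity of D
  have hterm : ∀ i ∈ R, ∀ j ∈ R, 0 ≤ (a i - a j) * t i j := by
    intro i hi j hj
    rw [hR, Finset.mem_range, Nat.lt_succ_iff] at hi hj
    rcases le_total i j with h | h
    · have ha : a i - a j ≤ 0 := sub_nonpos.mpr (hmono i j h hj)
      have htle : t i j ≤ 0 := sub_nonpos.mpr (pow_cross_le_s16 h2 h12 h)
      nlinarith [mul_nonneg (neg_nonneg.mpr ha) (neg_nonneg.mpr htle)]
    · have ha : 0 ≤ a i - a j := sub_nonneg.mpr (hmono j i h hi)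
      have htge : 0 ≤ t i j := by
        have := pow_cross_le_s16 h2 h12 h (z1 := z1) (z2 := z2)
        simp only [ht]
        nlinarith [this]
      exact mul_nonneg ha htge
  -- find a strictly increasing pair
  obtain ⟨i, j, hiL, hjL, hne'⟩ := hne
  obtain ⟨i0, j0, hi0, hj0, hij0, hlt⟩ :
      ∃ i0 j0, i0 ≤ L ∧ j0 ≤ L ∧ i0 < j0 ∧ a i0 < a j0 := by
    rcases lt_trichotomy i j with h | h | h
    · exact ⟨i, j, hiL, hjL, h, lt_of_le_of_ne (hmono i j h.le hjL) hne'⟩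
    · exact absurd (by rw [h]) hne'
    · exact ⟨j, i, hjL, hiL, h, lt_of_le_of_ne (hmono j i h.le hiL) (Ne.symm hne')⟩
  have hi0R : i0 ∈ R := by rw [hR, Finset.mem_range]; omega
  have hj0R : j0 ∈ R := by rw [hR, Finset.mem_range]; omega
  have hposterm : 0 < (a i0 - a j0) * t i0 j0 := by
    have ha : a i0 - a j0 < 0 := sub_neg.mpr hlt
    have htlt : t i0 j0 < 0 := sub_neg.mpr (pow_cross_lt_s16 h2 h12 hij0)
    exact mul_pos_of_neg_of_neg ha htlt
  have hDpos : 0 < ∑ i ∈ R, ∑ j ∈ R, (a i - a j) * t i j := by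
    refine Finset.sum_pos' (fun i hi => Finset.sum_nonneg fun j hj => hterm i hi j hj)
      ⟨i0, hi0R, ?_⟩
    exact Finset.sum_pos' (fun j hj => hterm i0 hi0R j hj) ⟨j0, hj0R, hposterm⟩
  have hTpos : 0 < ∑ i ∈ R, ∑ j ∈ R, a i * t i j := by
    rw [hT] at hDpos; linarith
  have hexpand : ∑ i ∈ R, ∑ j ∈ R, a i * t i j
      = (∑ i ∈ R, a i * z1 ^ i) * (∑ i ∈ R, z2 ^ i)
        - (∑ i ∈ R, a i * z2 ^ i) * (∑ i ∈ R, z1 ^ i) := by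
    rw [Finset.sum_mul_sum, Finset.sum_mul_sum, ← Finset.sum_sub_distrib]
    refine Finset.sum_congr rfl fun i _ => ?_
    rw [← Finset.sum_sub_distrib]
    refine Finset.sum_congr rfl fun j _ => ?_
    simp only [ht]; ring
  rw [hexpand] at hTpos
  linarith

theorem stmt_16 (L : ℕ) (hL : 0 < L) (a : ℕ → ℝ)
    (hmono : ∀ i j, i ≤ j → j ≤ L → a i ≤ a j)
    (hne : ∃ i j, i ≤ L ∧ j ≤ L ∧ a i ≠ a j) :
    ∀ y1 y2 : ℝ, 0 < y1 → y1 < y2 → y2 < L →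
      (∑ i ∈ Finset.range (L + 1), a i * (1 - y2 / L) ^ i)
          / (∑ i ∈ Finset.range (L + 1), (1 - y2 / L) ^ i)
        < (∑ i ∈ Finset.range (L + 1), a i * (1 - y1 / L) ^ i)
          / (∑ i ∈ Finset.range (L + 1), (1 - y1 / L) ^ i) := by
  intro y1 y2 hy1 h12 hy2
  have hLpos : (0:ℝ) < L := by exact_mod_cast hL
  have hz2 : 0 < 1 - y2 / L := by
    have : y2 / L < 1 := (div_lt_one hLpos).mpr hy2
    linarith
  have hz12 : 1 - y2 / L < 1 - y1 / L := by
    have : y1 / L < y2 / L := by gcongr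
    linarith
  have hden2 : 0 < ∑ i ∈ Finset.range (L + 1), (1 - y2 / L) ^ i :=
    Finset.sum_pos (fun i _ => pow_pos hz2 i) Finset.nonempty_range_add_one
  have hden1 : 0 < ∑ i ∈ Finset.range (L + 1), (1 - y1 / L) ^ i :=
    Finset.sum_pos (fun i _ => pow_pos (hz2.trans hz12) i) Finset.nonempty_range_add_one
  rw [div_lt_div_iff₀ hden2 hden1]
  exact key_ineq L a hmono hne (1 - y1 / L) (1 - y2 / L) hz2 hz12
end
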